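/- Define G_p(z) = a/(z − α) + (1−a)/(z − α') for z ∈ ℂ ∖ {α, α'}, and B_p(w) = (α+α')/2 + (1 + √(D_p(w)))/(2w) for w ∈ ℂ ∖ (I_p ∪ {0}). Then: (1) B_p is continuous on ℂ ∖ (I_p ∪ {0}) and analytic on ℂ ∖ (cl(I_p) ∪ {0}); (2) for every w ∈ ℂ ∖ (I_p ∪ {0}), B_p(w) ∉ {α, α'} and G_p(B_p(w)) = w; (3) there exists R > 0 such that for every z ∈ ℂ with |z| > R one has G_p(z) ∈ ℂ ∖ (I_p ∪ {0}) and B_p(G_p(z)) = z; (4) for w₀ ∈ I_p, the limit of B_p(w) as w → w₀ from the right equals (α+α')/2 + (1 + sgn(Im(w₀))·i·√(−D_p(w₀)))/(2w₀), and the limit from the left equals (α+α')/2 + (1 − sgn(Im(w₀))·i·√(−D_p(w₀)))/(2w₀); (5) |B_p(w)| → ∞ as w → 0 within ℂ ∖ (I_p ∪ {0}). -/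

import Mathlib

open Set Filter
set_option maxHeartbeats 1000000

section helpers
lemma sqrt_half_val {x : ℝ} (hx : x < 0) :
    Complex.exp ((Real.log (-x) + Real.pi * Complex.I) * ((1:ℂ)/2))
      = Complex.I * (Real.sqrt (-x) : ℝ) := by
  have hx0 : (0:ℝ) < -x := by linarith
  have h1 : (Real.log (-x) + Real.pi * Complex.I) * ((1:ℂ)/2)
      = ((Real.log (-x) / 2 : ℝ) : ℂ) + ((Real.pi / 2 : ℝ) : ℂ) * Complex.I := by
    push_cast; ring
  rw [h1, Complex.exp_add, Complex.exp_mul_I, ← Complex.ofReal_exp,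
    ← Complex.ofReal_cos, ← Complex.ofReal_sin, Real.cos_pi_div_two, Real.sin_pi_div_two]
  have h2 : Real.exp (Real.log (-x) / 2) = Real.sqrt (-x) := by
    rw [Real.sqrt_eq_rpow, Real.rpow_def_of_pos hx0]
    ring_nf
  rw [h2]; push_cast; ring

lemma tendsto_sqrt_pos {x : ℝ} (hx : x < 0) :
    Tendsto (fun z : ℂ => z ^ ((1:ℂ)/2)) (nhdsWithin (x:ℂ) {z : ℂ | 0 < z.im})
      (nhds (Complex.I * (Real.sqrt (-x) : ℝ))) := by
  have hx0 : (x:ℂ) ≠ 0 := by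
    simpa using (show x ≠ 0 by linarith)
  have hlog : Tendsto Complex.log (nhdsWithin (x:ℂ) {z : ℂ | 0 < z.im})
      (nhds (Real.log (‖(x:ℂ)‖) + Real.pi * Complex.I)) := by
    refine (Complex.tendsto_log_nhdsWithin_im_nonneg_of_re_neg_of_im_zero ?_ ?_).mono_left
      (nhdsWithin_mono _ ?_)
    · simpa using hx
    · simp
    · intro z hz
      simp only [Set.mem_setOf_eq] at hz ⊢
      exact le_of_lt hz
  have habs : ‖(x:ℂ)‖ = -x := by
    rw [Complex.norm_real, Real.norm_eq_abs, abs_of_neg hx]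
  rw [habs] at hlog
  have hexp : Tendsto (fun z : ℂ => Complex.exp (Complex.log z * ((1:ℂ)/2)))
      (nhdsWithin (x:ℂ) {z : ℂ | 0 < z.im})
      (nhds (Complex.exp ((Real.log (-x) + Real.pi * Complex.I) * ((1:ℂ)/2)))) :=
    (Complex.continuous_exp.tendsto _).comp (hlog.mul_const _)
  rw [sqrt_half_val hx] at hexp
  refine hexp.congr' ?_
  have hne : ∀ᶠ z : ℂ in nhdsWithin (x:ℂ) {z : ℂ | 0 < z.im}, z ≠ 0 :=
    eventually_nhdsWithin_of_eventually_nhds (eventually_ne_nhds hx0)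
  filter_upwards [hne] with z hz
  rw [Complex.cpow_def_of_ne_zero hz]

lemma tendsto_sqrt_neg {x : ℝ} (hx : x < 0) :
    Tendsto (fun z : ℂ => z ^ ((1:ℂ)/2)) (nhdsWithin (x:ℂ) {z : ℂ | z.im < 0})
      (nhds (-(Complex.I * (Real.sqrt (-x) : ℝ)))) := by
  have hx0 : (x:ℂ) ≠ 0 := by
    simpa using (show x ≠ 0 by linarith)
  have hlog : Tendsto Complex.log (nhdsWithin (x:ℂ) {z : ℂ | z.im < 0})
      (nhds (Real.log (‖(x:ℂ)‖) - Real.pi * Complex.I)) := by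
    refine Complex.tendsto_log_nhdsWithin_im_neg_of_re_neg_of_im_zero ?_ ?_
    · simpa using hx
    · simp
  have habs : ‖(x:ℂ)‖ = -x := by
    rw [Complex.norm_real, Real.norm_eq_abs, abs_of_neg hx]
  rw [habs] at hlog
  have hexp : Tendsto (fun z : ℂ => Complex.exp (Complex.log z * ((1:ℂ)/2)))
      (nhdsWithin (x:ℂ) {z : ℂ | z.im < 0})
      (nhds (Complex.exp ((Real.log (-x) - Real.pi * Complex.I) * ((1:ℂ)/2)))) :=
    (Complex.continuous_exp.tendsto _).comp (hlog.mul_const _)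
  have hval : Complex.exp ((Real.log (-x) - Real.pi * Complex.I) * ((1:ℂ)/2))
      = -(Complex.I * (Real.sqrt (-x) : ℝ)) := by
    have hx0' : (0:ℝ) < -x := by linarith
    have h1 : (Real.log (-x) - Real.pi * Complex.I) * ((1:ℂ)/2)
        = ((Real.log (-x) / 2 : ℝ) : ℂ) + ((-(Real.pi / 2) : ℝ) : ℂ) * Complex.I := by
      push_cast; ring
    rw [h1, Complex.exp_add, Complex.exp_mul_I, ← Complex.ofReal_exp,
      ← Complex.ofReal_cos, ← Complex.ofReal_sin]
    rw [Real.cos_neg, Real.sin_neg, Real.cos_pi_div_two, Real.sin_pi_div_two]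
    have h2 : Real.exp (Real.log (-x) / 2) = Real.sqrt (-x) := by
      rw [Real.sqrt_eq_rpow, Real.rpow_def_of_pos hx0']
      ring_nf
    rw [h2]; push_cast; ring
  rw [hval] at hexp
  refine hexp.congr' ?_
  have hne : ∀ᶠ z : ℂ in nhdsWithin (x:ℂ) {z : ℂ | z.im < 0}, z ≠ 0 :=
    eventually_nhdsWithin_of_eventually_nhds (eventually_ne_nhds hx0)
  filter_upwards [hne] with z hz
  rw [Complex.cpow_def_of_ne_zero hz]
end helpers

theorem stmt5 (a α α' : ℝ) (ha : a ∈ Ioo (0 : ℝ) 1) (hαα : α ≠ α')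
    (𝒜 : ℝ) (h𝒜 : 𝒜 = α' - α)
    (Dp : ℂ → ℂ)
    (hDp : ∀ w : ℂ, Dp w = ((𝒜 : ℂ) * w + ((1 - 2 * a : ℝ) : ℂ)) ^ 2 + ((4 * a * (1 - a) : ℝ) : ℂ))
    (Ip : Set ℂ)
    (hIp : Ip = {w : ℂ | w.re = -(1 - 2 * a) / 𝒜 ∧ 2 * Real.sqrt (a * (1 - a)) / |𝒜| < |w.im|})
    (Gp : ℂ → ℂ)
    (hGp : ∀ z : ℂ, Gp z = (a : ℂ) / (z - (α : ℂ)) + ((1 - a : ℝ) : ℂ) / (z - (α' : ℂ)))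
    (Bp : ℂ → ℂ)
    (hBp : ∀ w : ℂ, Bp w = (((α + α') / 2 : ℝ) : ℂ) + (1 + (Dp w) ^ ((1 : ℂ) / 2)) / (2 * w)) :
    -- (1) continuity and analyticity
    ContinuousOn Bp (Ip ∪ {0})ᶜ
    ∧ AnalyticOnNhd ℂ Bp (closure Ip ∪ {0})ᶜ
    -- (2) B_p is a right inverse of G_p
    ∧ (∀ w : ℂ, w ∉ Ip → w ≠ 0 → Bp w ≠ (α : ℂ) ∧ Bp w ≠ (α' : ℂ) ∧ Gp (Bp w) = w)
    -- (3) B_p inverts G_p near infinity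
    ∧ (∃ R : ℝ, 0 < R ∧ ∀ z : ℂ, R < ‖z‖ →
        Gp z ∉ Ip ∧ Gp z ≠ 0 ∧ Bp (Gp z) = z)
    -- (4) one-sided limits at I_p
    ∧ (∀ w₀ ∈ Ip,
        Tendsto Bp (nhdsWithin w₀ ({w : ℂ | w₀.re < w.re} ∩ (Ip ∪ {0})ᶜ))
          (nhds ((((α + α') / 2 : ℝ) : ℂ) +
            (1 + ((Real.sign w₀.im : ℝ) : ℂ) * Complex.I * (Real.sqrt (-(Dp w₀).re) : ℝ)) / (2 * w₀)))
        ∧ Tendsto Bp (nhdsWithin w₀ ({w : ℂ | w.re < w₀.re} ∩ (Ip ∪ {0})ᶜ))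
          (nhds ((((α + α') / 2 : ℝ) : ℂ) +
            (1 - ((Real.sign w₀.im : ℝ) : ℂ) * Complex.I * (Real.sqrt (-(Dp w₀).re) : ℝ)) / (2 * w₀))))
    -- (5) |B_p(w)| → ∞ as w → 0
    ∧ Tendsto (fun w => ‖(Bp w)‖) (nhdsWithin 0 (Ip ∪ {0})ᶜ) atTop := by
  obtain ⟨ha0, ha1⟩ := ha
  have ha1' : (0:ℝ) < 1 - a := by linarith
  have h𝒜0 : 𝒜 ≠ 0 := by rw [h𝒜]; exact sub_ne_zero.mpr (Ne.symm hαα)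
  have h𝒜abs : (0:ℝ) < |𝒜| := abs_pos.mpr h𝒜0
  have h𝒜sq : (0:ℝ) < 𝒜^2 := lt_of_le_of_ne (sq_nonneg 𝒜) (Ne.symm (pow_ne_zero 2 h𝒜0))
  have hsqa : Real.sqrt (a*(1-a)) ^ 2 = a*(1-a) := Real.sq_sqrt (le_of_lt (mul_pos ha0 ha1'))
  have hsqa0 : 0 < Real.sqrt (a*(1-a)) := Real.sqrt_pos.mpr (mul_pos ha0 ha1')
  have hb0 : (0:ℝ) < 2 * Real.sqrt (a*(1-a)) / |𝒜| := by positivity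
  -- real and imaginary parts of Dp
  have hre : ∀ w : ℂ, (Dp w).re = (𝒜 * w.re + (1 - 2*a))^2 - (𝒜 * w.im)^2 + 4*a*(1-a) := by
    intro w
    rw [hDp w]
    simp [Complex.add_re, Complex.add_im, Complex.mul_re, Complex.mul_im, pow_two]
    try ring
  have him : ∀ w : ℂ, (Dp w).im = 2 * (𝒜 * w.re + (1 - 2*a)) * (𝒜 * w.im) := by
    intro w
    rw [hDp w]
    simp [Complex.add_re, Complex.add_im, Complex.mul_re, Complex.mul_im, pow_two]
    try ring
  -- Dp on Ip is a negative real
  have hIpD : ∀ w ∈ Ip, (Dp w).im = 0 ∧ (Dp w).re < 0 := by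
    intro w hw
    rw [hIp] at hw
    obtain ⟨h1, h2⟩ := hw
    have e : 𝒜 * w.re + (1 - 2*a) = 0 := by
      rw [h1]; field_simp; ring
    constructor
    · rw [him w, e]; ring
    · rw [hre w, e]
      have h3 : 2 * Real.sqrt (a*(1-a)) < |𝒜| * |w.im| := by
        rw [div_lt_iff₀ h𝒜abs] at h2
        linarith [mul_comm |w.im| |𝒜|]
      have h4 : (|𝒜| * |w.im|)^2 = (𝒜 * w.im)^2 := by
        rw [← abs_mul, _root_.sq_abs]
      have h5 : (2 * Real.sqrt (a*(1-a)))^2 < (|𝒜| * |w.im|)^2 :=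
        pow_lt_pow_left₀ h3 (by positivity) two_ne_zero
      nlinarith [hsqa, h4, h5]
  -- off Ip, Dp is zero or in the slit plane
  have hoffIp : ∀ w : ℂ, Dp w ≠ 0 → Dp w ∉ Complex.slitPlane → w ∈ Ip := by
    intro w hne hns
    rw [Complex.mem_slitPlane_iff] at hns
    push_neg at hns
    obtain ⟨hre_le, him_eq⟩ := hns
    have h0 : 2 * (𝒜 * w.re + (1 - 2*a)) * (𝒜 * w.im) = 0 := by rw [← him w]; exact him_eq
    rcases mul_eq_zero.mp h0 with h | h
    · rcases mul_eq_zero.mp h with h' | h'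
      · norm_num at h'
      · -- main case : 𝒜 * w.re + (1-2a) = 0
        have hre' := hre w
        rw [h'] at hre'
        have hlt : (Dp w).re < 0 := by
          rcases lt_or_eq_of_le hre_le with hlt | heq
          · exact hlt
          · exfalso
            apply hne
            exact Complex.ext (by simpa using heq) (by simpa using him_eq)
        rw [hre'] at hlt
        rw [hIp]
        constructor
        · field_simp
          linarith [h']
        · rw [div_lt_iff₀ h𝒜abs]
          have h4 : (|w.im| * |𝒜|)^2 = (𝒜 * w.im)^2 := by
            rw [mul_comm, ← abs_mul, _root_.sq_abs]
          refine lt_of_pow_lt_pow_left₀ 2 (by positivity) ?_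
          rw [h4]
          nlinarith [hsqa]
    · exfalso
      have h' : w.im = 0 := by
        rcases mul_eq_zero.mp h with h' | h'
        · exact absurd h' h𝒜0
        · exact h'
      have := hre w
      rw [h'] at this
      nlinarith [sq_nonneg (𝒜 * w.re + (1 - 2*a)), mul_pos ha0 ha1']
  -- off closure Ip, Dp is in the slit plane
  have hoffCl : ∀ w : ℂ, Dp w ∉ Complex.slitPlane → w ∈ closure Ip := by
    intro w hns
    rw [Complex.mem_slitPlane_iff] at hns
    push_neg at hns
    obtain ⟨hre_le, him_eq⟩ := hns
    have h0 : 2 * (𝒜 * w.re + (1 - 2*a)) * (𝒜 * w.im) = 0 := by rw [← him w]; exact him_eq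
    have e : 𝒜 * w.re + (1 - 2*a) = 0 := by
      rcases mul_eq_zero.mp h0 with h | h
      · rcases mul_eq_zero.mp h with h' | h'
        · norm_num at h'
        · exact h'
      · exfalso
        have h' : w.im = 0 := by
          rcases mul_eq_zero.mp h with h' | h'
          · exact absurd h' h𝒜0
          · exact h'
        have := hre w
        rw [h'] at this
        nlinarith [sq_nonneg (𝒜 * w.re + (1 - 2*a)), mul_pos ha0 ha1']
    have hwre : w.re = -(1 - 2*a)/𝒜 := by
      field_simp
      linarith [e]
    have hre' := hre w
    rw [e] at hre'
    have hge : 2 * Real.sqrt (a*(1-a)) / |𝒜| ≤ |w.im| := by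
      rw [div_le_iff₀ h𝒜abs]
      rw [hre'] at hre_le
      have h4 : (|w.im| * |𝒜|)^2 = (𝒜 * w.im)^2 := by
        rw [mul_comm, ← abs_mul, _root_.sq_abs]
      refine le_of_pow_le_pow_left₀ two_ne_zero (by positivity) ?_
      rw [h4]
      nlinarith [hsqa]
    have him0 : w.im ≠ 0 := by
      intro h
      rw [h] at hge
      simp at hge
      linarith
    rcases lt_or_gt_of_ne him0 with hneg | hpos
    · have hT : Tendsto (fun t : ℝ => w - (t:ℂ) * Complex.I) (nhdsWithin 0 (Ioi 0)) (nhds w) := by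
        have hc : Continuous (fun t : ℝ => w - (t:ℂ) * Complex.I) := by fun_prop
        have h' := (hc.tendsto 0).mono_left (nhdsWithin_le_nhds (s := Ioi (0:ℝ)))
        simpa using h'
      refine mem_closure_of_tendsto hT ?_
      filter_upwards [self_mem_nhdsWithin] with t ht
      rw [hIp]
      have hre2 : (w - (t:ℂ) * Complex.I).re = w.re := by simp
      have him2 : (w - (t:ℂ) * Complex.I).im = w.im - t := by simp
      constructor
      · rw [hre2]; exact hwre
      · rw [him2]
        have h1 : |w.im| = -w.im := abs_of_neg hneg
        have ht' : 0 < t := ht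
        have h2 : w.im - t < 0 := by linarith
        rw [abs_of_neg h2]
        linarith
    · have hT : Tendsto (fun t : ℝ => w + (t:ℂ) * Complex.I) (nhdsWithin 0 (Ioi 0)) (nhds w) := by
        have hc : Continuous (fun t : ℝ => w + (t:ℂ) * Complex.I) := by fun_prop
        have h' := (hc.tendsto 0).mono_left (nhdsWithin_le_nhds (s := Ioi (0:ℝ)))
        simpa using h'
      refine mem_closure_of_tendsto hT ?_
      filter_upwards [self_mem_nhdsWithin] with t ht
      rw [hIp]
      have hre2 : (w + (t:ℂ) * Complex.I).re = w.re := by simp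
      have him2 : (w + (t:ℂ) * Complex.I).im = w.im + t := by simp
      constructor
      · rw [hre2]; exact hwre
      · rw [him2]
        have h1 : |w.im| = w.im := abs_of_pos hpos
        have ht' : 0 < t := ht
        have h2 : 0 < w.im + t := by linarith
        rw [abs_of_pos h2]
        linarith
  have hDpfun : Dp = fun w : ℂ => ((𝒜 : ℂ) * w + ((1 - 2 * a : ℝ) : ℂ)) ^ 2 + ((4 * a * (1 - a) : ℝ) : ℂ) :=
    funext hDp
  have hDpc : Continuous Dp := by
    rw [hDpfun]; fun_prop
  have hsqc : ∀ w : ℂ, w ∉ Ip → ContinuousAt (fun z : ℂ => Dp z ^ ((1:ℂ)/2)) w := by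
    intro w hw
    by_cases h0 : Dp w = 0
    · have hc0 : ContinuousAt (fun u : ℂ => u ^ ((1:ℂ)/2)) 0 := by
        have h := Complex.continuousAt_cpow_zero_of_re_pos (z := (1:ℂ)/2) (by norm_num)
        have hpair : ContinuousAt (fun u : ℂ => ((u, (1:ℂ)/2) : ℂ × ℂ)) 0 := by fun_prop
        have h2 : ContinuousAt ((fun p : ℂ × ℂ => p.1 ^ p.2) ∘ (fun u : ℂ => (u, (1:ℂ)/2))) 0 :=
          ContinuousAt.comp h hpair
        exact h2
      exact ContinuousAt.comp (h0.symm ▸ hc0) hDpc.continuousAt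
    · have hs : Dp w ∈ Complex.slitPlane := by
        by_contra hns
        exact hw (hoffIp w h0 hns)
      exact (_root_.continuousAt_cpow_const hs).comp hDpc.continuousAt
  have hBpfun : Bp = fun w : ℂ => (((α + α') / 2 : ℝ) : ℂ) + (1 + (Dp w) ^ ((1 : ℂ) / 2)) / (2 * w) :=
    funext hBp
  -- (1a)
  have part1a : ContinuousOn Bp (Ip ∪ {0})ᶜ := by
    intro w hw
    simp only [Set.mem_compl_iff, Set.mem_union, Set.mem_singleton_iff] at hw
    push_neg at hw
    apply ContinuousAt.continuousWithinAt
    rw [hBpfun]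
    have h2w : (2*w : ℂ) ≠ 0 := by simp [hw.2]
    exact continuousAt_const.add ((continuousAt_const.add (hsqc w hw.1)).div (by fun_prop) h2w)
  -- (1b)
  have part1b : AnalyticOnNhd ℂ Bp (closure Ip ∪ {0})ᶜ := by
    intro w hw
    simp only [Set.mem_compl_iff, Set.mem_union, Set.mem_singleton_iff] at hw
    push_neg at hw
    obtain ⟨hwc, hw0⟩ := hw
    have hs : Dp w ∈ Complex.slitPlane := by
      by_contra hns
      exact hwc (hoffCl w hns)
    have hDpa : AnalyticAt ℂ Dp w := by
      rw [hDpfun]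
      exact (((analyticAt_const.mul analyticAt_id).add analyticAt_const).pow 2).add analyticAt_const
    have h2w : (2*w : ℂ) ≠ 0 := by simp [hw0]
    rw [hBpfun]
    exact analyticAt_const.add ((analyticAt_const.add (hDpa.cpow analyticAt_const hs)).div
      (analyticAt_const.mul analyticAt_id) h2w)
  -- square of the square root
  have hsqsq : ∀ w : ℂ, (Dp w ^ ((1:ℂ)/2))^2 = Dp w := by
    intro w
    have h := Complex.cpow_nat_inv_pow (Dp w) (n := 2) two_ne_zero
    rw [show (((2:ℕ)):ℂ)⁻¹ = ((1:ℂ)/2) by norm_num] at h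
    exact_mod_cast h
  have hDval : ∀ w : ℂ, Dp w = ((α':ℂ) - (α:ℂ))^2 * w^2 + 2*((α':ℂ)-(α:ℂ))*(1-2*(a:ℂ))*w + 1 := by
    intro w
    rw [hDp w, h𝒜]
    push_cast
    ring
  -- (2)
  have part2 : ∀ w : ℂ, w ∉ Ip → w ≠ 0 → Bp w ≠ (α:ℂ) ∧ Bp w ≠ (α':ℂ) ∧ Gp (Bp w) = w := by
    intro w _ hw0
    have hs2 : (Dp w ^ ((1:ℂ)/2))^2 = ((α':ℂ)-α)^2*w^2 + 2*((α':ℂ)-α)*(1-2*(a:ℂ))*w + 1 := by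
      rw [hsqsq w]; exact hDval w
    have hu : 2*w*Bp w - ((α:ℂ)+α')*w - 1 = Dp w ^ ((1:ℂ)/2) := by
      rw [hBp w]
      push_cast
      field_simp
      ring
    have hu2 : (2*w*Bp w - ((α:ℂ)+α')*w - 1)^2
        = ((α':ℂ)-α)^2*w^2 + 2*((α':ℂ)-α)*(1-2*(a:ℂ))*w + 1 := by
      rw [hu]; exact hs2
    have h4w : (4*w : ℂ) ≠ 0 := by simp [hw0]
    have hquad : w * (Bp w - α) * (Bp w - α') = Bp w - ((a:ℂ)*α' + (1-(a:ℂ))*α) := by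
      apply mul_left_cancel₀ h4w
      linear_combination hu2
    have hαℂ : ((α':ℂ)) - α ≠ 0 := sub_ne_zero.mpr (by exact_mod_cast Ne.symm hαα)
    have haℂ : (a:ℂ) ≠ 0 := Complex.ofReal_ne_zero.mpr (ne_of_gt ha0)
    have ha1ℂ : (1 - (a:ℂ)) ≠ 0 := by
      intro h
      have : (a:ℂ) = 1 := by linear_combination -h
      have : a = (1:ℝ) := by exact_mod_cast this
      linarith
    have hBα : Bp w ≠ (α:ℂ) := by
      intro h
      have h2 := hquad
      rw [h] at h2
      have h3 : (a:ℂ) * ((α':ℂ) - α) = 0 := by linear_combination h2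
      rcases mul_eq_zero.mp h3 with h4 | h4
      · exact haℂ h4
      · exact hαℂ h4
    have hBα' : Bp w ≠ (α':ℂ) := by
      intro h
      have h2 := hquad
      rw [h] at h2
      have h3 : (1-(a:ℂ)) * ((α':ℂ) - α) = 0 := by linear_combination -h2
      rcases mul_eq_zero.mp h3 with h4 | h4
      · exact ha1ℂ h4
      · exact hαℂ h4
    refine ⟨hBα, hBα', ?_⟩
    rw [hGp]
    have d1 : Bp w - (α:ℂ) ≠ 0 := sub_ne_zero.mpr hBα
    have d2 : Bp w - (α':ℂ) ≠ 0 := sub_ne_zero.mpr hBα'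
    field_simp
    push_cast
    linear_combination -hquad
  -- (3)
  have part3 : ∃ R : ℝ, 0 < R ∧ ∀ z : ℂ, R < ‖z‖ →
      Gp z ∉ Ip ∧ Gp z ≠ 0 ∧ Bp (Gp z) = z := by
    set l : Filter ℂ := comap (fun z : ℂ => ‖z‖) atTop with hldef
    have habs_l : Tendsto (fun z : ℂ => ‖z‖) l atTop := tendsto_comap
    have hinv : ∀ c : ℝ, Tendsto (fun z : ℂ => (z - (c:ℂ))⁻¹) l (nhds 0) := by
      intro c
      have h1 : Tendsto (fun z : ℂ => ‖(z - (c:ℂ))‖) l atTop := by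
        refine tendsto_atTop_mono' l ?_ (tendsto_atTop_add_const_right _ (-(‖(c:ℂ)‖)) habs_l)
        filter_upwards with z
        simpa using norm_sub_norm_le z ((c:ℝ):ℂ)
      rw [tendsto_zero_iff_norm_tendsto_zero]
      simpa using h1.inv_tendsto_atTop.congr (fun z => by simp)
    have hGfun : Gp = fun z : ℂ => (a:ℂ) * (z - (α:ℂ))⁻¹ + ((1-a:ℝ):ℂ) * (z - (α':ℂ))⁻¹ := by
      funext z
      rw [hGp z, div_eq_mul_inv, div_eq_mul_inv]
    have hG0 : Tendsto Gp l (nhds 0) := by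
      rw [hGfun]
      have h := ((tendsto_const_nhds (x := ((a:ℝ):ℂ))).mul (hinv α)).add
        ((tendsto_const_nhds (x := ((1-a:ℝ):ℂ))).mul (hinv α'))
      simpa using h
    have hDp0 : Dp 0 = 1 := by
      rw [hDp 0]
      push_cast
      ring_nf
    have hsGlim : Tendsto (fun z : ℂ => Dp (Gp z) ^ ((1:ℂ)/2)) l (nhds 1) := by
      have h1 : Tendsto (fun z : ℂ => Dp (Gp z)) l (nhds 1) := by
        have h := (hDpc.continuousAt (x := 0)).tendsto.comp hG0
        rwa [hDp0] at h
      have h2 := Filter.Tendsto.cpow h1 (tendsto_const_nhds (x := (1:ℂ)/2))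
        (by simp [Complex.mem_slitPlane_iff])
      simpa using h2
    have hs'lim : Tendsto (fun z : ℂ => 2 * Gp z * (z - (((α+α')/2:ℝ):ℂ)) - 1) l (nhds 1) := by
      have key : ∀ᶠ z in l, 2*((a:ℂ)*(1 + ((α:ℂ)-(((α+α')/2:ℝ):ℂ))*(z-(α:ℂ))⁻¹)
            + ((1-a:ℝ):ℂ)*(1 + ((α':ℂ)-(((α+α')/2:ℝ):ℂ))*(z-(α':ℂ))⁻¹)) - 1
          = 2 * Gp z * (z - (((α+α')/2:ℝ):ℂ)) - 1 := by
        filter_upwards [habs_l.eventually_gt_atTop (‖((α:ℝ):ℂ)‖),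
          habs_l.eventually_gt_atTop (‖((α':ℝ):ℂ)‖)] with z h1 h2
        have hz1 : z - ((α:ℝ):ℂ) ≠ 0 := by
          rw [sub_ne_zero]
          intro h
          rw [h] at h1
          exact lt_irrefl _ h1
        have hz2 : z - ((α':ℝ):ℂ) ≠ 0 := by
          rw [sub_ne_zero]
          intro h
          rw [h] at h2
          exact lt_irrefl _ h2
        rw [hGp z]
        field_simp
        ring
      have hlim : Tendsto (fun z : ℂ => 2*((a:ℂ)*(1 + ((α:ℂ)-(((α+α')/2:ℝ):ℂ))*(z-(α:ℂ))⁻¹)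
            + ((1-a:ℝ):ℂ)*(1 + ((α':ℂ)-(((α+α')/2:ℝ):ℂ))*(z-(α':ℂ))⁻¹)) - 1) l
          (nhds (2*((a:ℂ)*(1 + ((α:ℂ)-(((α+α')/2:ℝ):ℂ))*0)
            + ((1-a:ℝ):ℂ)*(1 + ((α':ℂ)-(((α+α')/2:ℝ):ℂ))*0)) - 1)) := by
        exact (((tendsto_const_nhds.mul (tendsto_const_nhds.add
          (tendsto_const_nhds.mul (hinv α)))).add
          (tendsto_const_nhds.mul (tendsto_const_nhds.add
          (tendsto_const_nhds.mul (hinv α'))))).const_mul 2).sub_const 1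
      have hval : (2*((a:ℂ)*(1 + ((α:ℂ)-(((α+α')/2:ℝ):ℂ))*0)
          + ((1-a:ℝ):ℂ)*(1 + ((α':ℂ)-(((α+α')/2:ℝ):ℂ))*0)) - 1) = 1 := by
        push_cast
        ring
      rw [hval] at hlim
      exact hlim.congr' key
    have hev : ∀ᶠ z in l, Gp z ∉ Ip ∧ Gp z ≠ 0 ∧ Bp (Gp z) = z := by
      have e1 := habs_l.eventually_gt_atTop (‖((α:ℝ):ℂ)‖)
      have e2 := habs_l.eventually_gt_atTop (‖((α':ℝ):ℂ)‖)
      have e3 := habs_l.eventually_gt_atTop (‖(((a*α' + (1-a)*α :ℝ)):ℂ)‖)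
      have e4 : ∀ᶠ z in l, ‖(Gp z)‖ < 2 * Real.sqrt (a*(1-a)) / |𝒜| := by
        have h := Metric.tendsto_nhds.mp hG0 _ hb0
        filter_upwards [h] with z hz
        rwa [Complex.dist_eq, sub_zero] at hz
      have e5 := Metric.tendsto_nhds.mp hsGlim 1 one_pos
      have e6 := Metric.tendsto_nhds.mp hs'lim 1 one_pos
      filter_upwards [e1, e2, e3, e4, e5, e6] with z h1 h2 h3 h4 h5 h6
      have hzα : z ≠ ((α:ℝ):ℂ) := by
        intro h
        rw [h] at h1
        exact lt_irrefl _ h1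
      have hzα' : z ≠ ((α':ℝ):ℂ) := by
        intro h
        rw [h] at h2
        exact lt_irrefl _ h2
      have hd1 : z - ((α:ℝ):ℂ) ≠ 0 := sub_ne_zero.mpr hzα
      have hd2 : z - ((α':ℝ):ℂ) ≠ 0 := sub_ne_zero.mpr hzα'
      have hroot : Gp z * (z - (α:ℂ)) * (z - (α':ℂ)) = z - (((a*α' + (1-a)*α :ℝ)):ℂ) := by
        rw [hGp z]
        field_simp
        push_cast
        ring
      have hw0 : Gp z ≠ 0 := by
        intro h
        rw [h] at hroot
        simp only [zero_mul] at hroot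
        have : z = (((a*α' + (1-a)*α :ℝ)):ℂ) := by linear_combination -hroot
        rw [this] at h3
        exact lt_irrefl _ h3
      have hwIp : Gp z ∉ Ip := by
        intro hmem
        rw [hIp] at hmem
        have h5' : |(Gp z).im| ≤ ‖(Gp z)‖ := Complex.abs_im_le_norm _
        linarith [hmem.2]
      refine ⟨hwIp, hw0, ?_⟩
      -- the square of s' equals Dp (Gp z)
      have hs'sq : (2 * Gp z * (z - (((α+α')/2:ℝ):ℂ)) - 1)^2 = Dp (Gp z) := by
        have hroot' := hroot
        push_cast at hroot'
        rw [hDval (Gp z)]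
        push_cast
        linear_combination (4 * Gp z) * hroot'
      have hss : ((Dp (Gp z) ^ ((1:ℂ)/2)) - (2 * Gp z * (z - (((α+α')/2:ℝ):ℂ)) - 1))
          * ((Dp (Gp z) ^ ((1:ℂ)/2)) + (2 * Gp z * (z - (((α+α')/2:ℝ):ℂ)) - 1)) = 0 := by
        linear_combination hsqsq (Gp z) - hs'sq
      rcases mul_eq_zero.mp hss with h | h
      · have hs_eq : Dp (Gp z) ^ ((1:ℂ)/2) = 2 * Gp z * (z - (((α+α')/2:ℝ):ℂ)) - 1 :=
          sub_eq_zero.mp h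
        rw [hBp (Gp z), hs_eq]
        field_simp
        ring
      · exfalso
        have hs_eq : Dp (Gp z) ^ ((1:ℂ)/2) = -(2 * Gp z * (z - (((α+α')/2:ℝ):ℂ)) - 1) := by
          linear_combination h
        have hA1 : ‖((2 * Gp z * (z - (((α+α')/2:ℝ):ℂ)) - 1) - 1)‖ < 1 := by
          rw [← Complex.dist_eq]
          exact h6
        have hA2 : ‖(-(2 * Gp z * (z - (((α+α')/2:ℝ):ℂ)) - 1) - 1)‖ < 1 := by
          rw [← hs_eq, ← Complex.dist_eq]
          exact h5
        set s' : ℂ := 2 * Gp z * (z - (((α+α')/2:ℝ):ℂ)) - 1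
        have hb1 : |(s' - 1).re| ≤ ‖(s' - 1)‖ := Complex.abs_re_le_norm _
        have hb2 : |(-s' - 1).re| ≤ ‖(-s' - 1)‖ := Complex.abs_re_le_norm _
        have hc1 : |s'.re - 1| < 1 := by
          have : (s' - 1).re = s'.re - 1 := by simp
          rw [this] at hb1
          linarith
        have hc2 : |-s'.re - 1| < 1 := by
          have : (-s' - 1).re = -s'.re - 1 := by simp
          rw [this] at hb2
          linarith
      
        rcases abs_lt.mp hc1 with ⟨hc1a, _⟩
        rcases abs_lt.mp hc2 with ⟨hc2a, _⟩
        linarith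
    rw [hldef, eventually_comap] at hev
    rcases (eventually_atTop).mp hev with ⟨R, hR⟩
    refine ⟨max R 1, lt_of_lt_of_le one_pos (le_max_right R 1), fun z hz => ?_⟩
    exact hR (‖z‖) (le_trans (le_max_left R 1) (le_of_lt hz)) z rfl
  -- (4)
  have part4 : ∀ w₀ ∈ Ip,
      Tendsto Bp (nhdsWithin w₀ ({w : ℂ | w₀.re < w.re} ∩ (Ip ∪ {0})ᶜ))
        (nhds ((((α + α') / 2 : ℝ) : ℂ) +
          (1 + ((Real.sign w₀.im : ℝ) : ℂ) * Complex.I * (Real.sqrt (-(Dp w₀).re) : ℝ)) / (2 * w₀)))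
      ∧ Tendsto Bp (nhdsWithin w₀ ({w : ℂ | w.re < w₀.re} ∩ (Ip ∪ {0})ᶜ))
        (nhds ((((α + α') / 2 : ℝ) : ℂ) +
          (1 - ((Real.sign w₀.im : ℝ) : ℂ) * Complex.I * (Real.sqrt (-(Dp w₀).re) : ℝ)) / (2 * w₀))) := by
    intro w₀ hw₀
    obtain ⟨hD_im, hD_re⟩ := hIpD w₀ hw₀
    have hw₀' := hw₀
    rw [hIp] at hw₀'
    obtain ⟨h1, h2⟩ := hw₀'
    have him0 : w₀.im ≠ 0 := by
      intro h
      rw [h] at h2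
      simp at h2
      linarith
    have hw00 : w₀ ≠ 0 := by
      intro h
      rw [h] at him0
      simp at him0
    have h2w0 : (2*w₀ : ℂ) ≠ 0 := by simp [hw00]
    have hAre : 𝒜 * w₀.re + (1 - 2*a) = 0 := by rw [h1]; field_simp; ring
    have himf : ∀ w : ℂ, (Dp w).im = 2*𝒜^2*(w.re - w₀.re)*w.im := by
      intro w
      rw [him w]
      linear_combination (2 * (𝒜 * w.im)) * hAre
    have hDcast : Dp w₀ = (((Dp w₀).re : ℝ) : ℂ) := Complex.ext (by simp) (by simp [hD_im])
    have keyPos : ∀ S : Set ℂ, (∀ᶠ w in nhdsWithin w₀ S, 0 < (Dp w).im) →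
        Tendsto Bp (nhdsWithin w₀ S)
          (nhds ((((α + α') / 2 : ℝ) : ℂ)
            + (1 + Complex.I * (Real.sqrt (-(Dp w₀).re) : ℝ)) / (2*w₀))) := by
      intro S hev'
      have hDt : Tendsto Dp (nhdsWithin w₀ S)
          (nhdsWithin (((Dp w₀).re : ℝ):ℂ) {z : ℂ | 0 < z.im}) := by
        rw [tendsto_nhdsWithin_iff]
        constructor
        · have h := (hDpc.continuousAt (x := w₀)).tendsto.mono_left (nhdsWithin_le_nhds (s := S))
          rwa [hDcast] at h
        · exact hev'
      have hsq := (tendsto_sqrt_pos hD_re).comp hDt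
      rw [hBpfun]
      refine tendsto_const_nhds.add (Filter.Tendsto.div (tendsto_const_nhds.add hsq) ?_ h2w0)
      exact ((continuous_const.mul continuous_id).tendsto w₀).mono_left nhdsWithin_le_nhds
    have keyNeg : ∀ S : Set ℂ, (∀ᶠ w in nhdsWithin w₀ S, (Dp w).im < 0) →
        Tendsto Bp (nhdsWithin w₀ S)
          (nhds ((((α + α') / 2 : ℝ) : ℂ)
            + (1 + -(Complex.I * (Real.sqrt (-(Dp w₀).re) : ℝ))) / (2*w₀))) := by
      intro S hev'
      have hDt : Tendsto Dp (nhdsWithin w₀ S)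
          (nhdsWithin (((Dp w₀).re : ℝ):ℂ) {z : ℂ | z.im < 0}) := by
        rw [tendsto_nhdsWithin_iff]
        constructor
        · have h := (hDpc.continuousAt (x := w₀)).tendsto.mono_left (nhdsWithin_le_nhds (s := S))
          rwa [hDcast] at h
        · exact hev'
      have hsq := (tendsto_sqrt_neg hD_re).comp hDt
      rw [hBpfun]
      refine tendsto_const_nhds.add (Filter.Tendsto.div (tendsto_const_nhds.add hsq) ?_ h2w0)
      exact ((continuous_const.mul continuous_id).tendsto w₀).mono_left nhdsWithin_le_nhds
    constructor
    · -- right limit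
      have hevre : ∀ᶠ w in nhdsWithin w₀ ({w : ℂ | w₀.re < w.re} ∩ (Ip ∪ {0})ᶜ), w₀.re < w.re := by
        filter_upwards [self_mem_nhdsWithin] with w hw
        exact hw.1
      rcases lt_or_gt_of_ne him0 with hneg | hpos
      · have hevim : ∀ᶠ w in nhdsWithin w₀ ({w : ℂ | w₀.re < w.re} ∩ (Ip ∪ {0})ᶜ), w.im < 0 :=
          ((Complex.continuous_im.tendsto w₀).eventually (eventually_lt_nhds hneg)).filter_mono
            nhdsWithin_le_nhds
        have hev' : ∀ᶠ w in nhdsWithin w₀ ({w : ℂ | w₀.re < w.re} ∩ (Ip ∪ {0})ᶜ), (Dp w).im < 0 := by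
          filter_upwards [hevre, hevim] with w hr hi
          rw [himf w]
          have h3 : 0 < 2*𝒜^2*(w.re - w₀.re) := by
            have : 0 < w.re - w₀.re := sub_pos.mpr hr
            positivity
          exact mul_neg_of_pos_of_neg h3 hi
        have h := keyNeg _ hev'
        have hTT : (((α + α') / 2 : ℝ) : ℂ) +
            (1 + ((Real.sign w₀.im : ℝ) : ℂ) * Complex.I * (Real.sqrt (-(Dp w₀).re) : ℝ)) / (2 * w₀)
            = (((α + α') / 2 : ℝ) : ℂ)
            + (1 + -(Complex.I * (Real.sqrt (-(Dp w₀).re) : ℝ))) / (2*w₀) := by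
          rw [Real.sign_of_neg hneg]
          push_cast
          ring
        rw [hTT]
        exact h
      · have hevim : ∀ᶠ w in nhdsWithin w₀ ({w : ℂ | w₀.re < w.re} ∩ (Ip ∪ {0})ᶜ), 0 < w.im :=
          ((Complex.continuous_im.tendsto w₀).eventually (eventually_gt_nhds hpos)).filter_mono
            nhdsWithin_le_nhds
        have hev' : ∀ᶠ w in nhdsWithin w₀ ({w : ℂ | w₀.re < w.re} ∩ (Ip ∪ {0})ᶜ), 0 < (Dp w).im := by
          filter_upwards [hevre, hevim] with w hr hi
          rw [himf w]
          have h3 : 0 < w.re - w₀.re := sub_pos.mpr hr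
          positivity
        have h := keyPos _ hev'
        have hTT : (((α + α') / 2 : ℝ) : ℂ) +
            (1 + ((Real.sign w₀.im : ℝ) : ℂ) * Complex.I * (Real.sqrt (-(Dp w₀).re) : ℝ)) / (2 * w₀)
            = (((α + α') / 2 : ℝ) : ℂ)
            + (1 + Complex.I * (Real.sqrt (-(Dp w₀).re) : ℝ)) / (2*w₀) := by
          rw [Real.sign_of_pos hpos]
          push_cast
          ring
        rw [hTT]
        exact h
    · -- left limit
      have hevre : ∀ᶠ w in nhdsWithin w₀ ({w : ℂ | w.re < w₀.re} ∩ (Ip ∪ {0})ᶜ), w.re < w₀.re := by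
        filter_upwards [self_mem_nhdsWithin] with w hw
        exact hw.1
      rcases lt_or_gt_of_ne him0 with hneg | hpos
      · have hevim : ∀ᶠ w in nhdsWithin w₀ ({w : ℂ | w.re < w₀.re} ∩ (Ip ∪ {0})ᶜ), w.im < 0 :=
          ((Complex.continuous_im.tendsto w₀).eventually (eventually_lt_nhds hneg)).filter_mono
            nhdsWithin_le_nhds
        have hev' : ∀ᶠ w in nhdsWithin w₀ ({w : ℂ | w.re < w₀.re} ∩ (Ip ∪ {0})ᶜ), 0 < (Dp w).im := by
          filter_upwards [hevre, hevim] with w hr hi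
          rw [himf w]
          have h3 : 2*𝒜^2*(w.re - w₀.re) < 0 := by
            have h4 : w.re - w₀.re < 0 := sub_neg.mpr hr
            have h5 : (0:ℝ) < 2*𝒜^2 := by positivity
            exact mul_neg_of_pos_of_neg h5 h4
          exact mul_pos_of_neg_of_neg h3 hi
        have h := keyPos _ hev'
        have hTT : (((α + α') / 2 : ℝ) : ℂ) +
            (1 - ((Real.sign w₀.im : ℝ) : ℂ) * Complex.I * (Real.sqrt (-(Dp w₀).re) : ℝ)) / (2 * w₀)
            = (((α + α') / 2 : ℝ) : ℂ)
            + (1 + Complex.I * (Real.sqrt (-(Dp w₀).re) : ℝ)) / (2*w₀) := by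
          rw [Real.sign_of_neg hneg]
          push_cast
          ring
        rw [hTT]
        exact h
      · have hevim : ∀ᶠ w in nhdsWithin w₀ ({w : ℂ | w.re < w₀.re} ∩ (Ip ∪ {0})ᶜ), 0 < w.im :=
          ((Complex.continuous_im.tendsto w₀).eventually (eventually_gt_nhds hpos)).filter_mono
            nhdsWithin_le_nhds
        have hev' : ∀ᶠ w in nhdsWithin w₀ ({w : ℂ | w.re < w₀.re} ∩ (Ip ∪ {0})ᶜ), (Dp w).im < 0 := by
          filter_upwards [hevre, hevim] with w hr hi
          rw [himf w]
          have h3 : 2*𝒜^2*(w.re - w₀.re) < 0 := by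
            have h4 : w.re - w₀.re < 0 := sub_neg.mpr hr
            have h5 : (0:ℝ) < 2*𝒜^2 := by positivity
            exact mul_neg_of_pos_of_neg h5 h4
          exact mul_neg_of_neg_of_pos h3 hi
        have h := keyNeg _ hev'
        have hTT : (((α + α') / 2 : ℝ) : ℂ) +
            (1 - ((Real.sign w₀.im : ℝ) : ℂ) * Complex.I * (Real.sqrt (-(Dp w₀).re) : ℝ)) / (2 * w₀)
            = (((α + α') / 2 : ℝ) : ℂ)
            + (1 + -(Complex.I * (Real.sqrt (-(Dp w₀).re) : ℝ))) / (2*w₀) := by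
          rw [Real.sign_of_pos hpos]
          push_cast
          ring
        rw [hTT]
        exact h
  -- (5)
  have part5 : Tendsto (fun w => ‖(Bp w)‖) (nhdsWithin 0 (Ip ∪ {0})ᶜ) atTop := by
    have h0Ip : (0:ℂ) ∉ Ip := by
      rw [hIp]
      intro h
      have h' := h.2
      simp at h'
      linarith
    have hDp0' : Dp 0 = 1 := by
      rw [hDp 0]
      push_cast
      ring_nf
    have hnum : Tendsto (fun w : ℂ => ‖(1 + Dp w ^ ((1:ℂ)/2))‖)
        (nhdsWithin 0 (Ip ∪ {0})ᶜ) (nhds 2) := by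
      have hc : ContinuousAt (fun w : ℂ => ‖(1 + Dp w ^ ((1:ℂ)/2))‖) 0 :=
        continuous_norm.continuousAt.comp (continuousAt_const.add (hsqc 0 h0Ip))
      have h := hc.tendsto.mono_left (nhdsWithin_le_nhds (s := (Ip ∪ {0})ᶜ))
      have hval : ‖(1 + Dp 0 ^ ((1:ℂ)/2))‖ = 2 := by
        rw [hDp0', Complex.one_cpow]
        norm_num
      simp only [hDp0', Complex.one_cpow] at h
      norm_num at h
      convert h using 2
      norm_num
    have hge1 : ∀ᶠ w in nhdsWithin (0:ℂ) (Ip ∪ {0})ᶜ, 1 ≤ ‖(1 + Dp w ^ ((1:ℂ)/2))‖ :=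
      hnum.eventually (eventually_ge_nhds (by norm_num))
    have habs2 : Tendsto (fun w : ℂ => ‖(2*w)‖) (nhdsWithin (0:ℂ) (Ip ∪ {0})ᶜ)
        (nhdsWithin 0 (Ioi 0)) := by
      rw [tendsto_nhdsWithin_iff]
      constructor
      · have hc : Continuous (fun w : ℂ => ‖(2*w)‖) :=
          continuous_norm.comp (continuous_const.mul continuous_id)
        have h := (hc.tendsto 0).mono_left (nhdsWithin_le_nhds (s := (Ip ∪ {0})ᶜ))
        simpa using h
      · filter_upwards [self_mem_nhdsWithin] with w hw
        simp only [Set.mem_compl_iff, Set.mem_union, Set.mem_singleton_iff] at hw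
        push_neg at hw
        have hne : (2*w : ℂ) ≠ 0 := by simp [hw.2]
        exact mem_Ioi.mpr (norm_pos_iff.mpr hne)
    have hden : Tendsto (fun w : ℂ => (‖(2*w)‖)⁻¹) (nhdsWithin (0:ℂ) (Ip ∪ {0})ᶜ)
        atTop := tendsto_inv_nhdsGT_zero.comp habs2
    have hfin := tendsto_atTop_add_const_right (nhdsWithin (0:ℂ) (Ip ∪ {0})ᶜ)
      (-(‖((((α+α')/2:ℝ)):ℂ)‖)) hden
    refine tendsto_atTop_mono' _ ?_ hfin
    filter_upwards [hge1] with w h1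
    rw [hBp w]
    have e1 : ‖((1 + Dp w ^ ((1:ℂ)/2)) / (2*w))‖
        = ‖(1 + Dp w ^ ((1:ℂ)/2))‖ * (‖(2*w)‖)⁻¹ := by
      rw [norm_div, div_eq_mul_inv]
    have h2 : (0:ℝ) ≤ (‖(2*w)‖)⁻¹ := by positivity
    have e2 : (‖(2*w)‖)⁻¹ ≤ ‖((1 + Dp w ^ ((1:ℂ)/2)) / (2*w))‖ := by
      rw [e1]
      exact le_mul_of_one_le_left h2 h1
    have e3 : ‖((1 + Dp w ^ ((1:ℂ)/2)) / (2*w))‖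
        - ‖((((α+α')/2:ℝ)):ℂ)‖
        ≤ ‖(((((α+α')/2:ℝ)):ℂ) + (1 + Dp w ^ ((1:ℂ)/2)) / (2*w))‖ := by
      have h4 := norm_add_le (((((α+α')/2:ℝ)):ℂ) + (1 + Dp w ^ ((1:ℂ)/2)) / (2*w))
        (-((((α+α')/2:ℝ)):ℂ))
      have h5 : (((((α+α')/2:ℝ)):ℂ) + (1 + Dp w ^ ((1:ℂ)/2)) / (2*w)) + -((((α+α')/2:ℝ)):ℂ)
          = (1 + Dp w ^ ((1:ℂ)/2)) / (2*w) := by ring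
      rw [h5, norm_neg] at h4
      linarith
    simp only [ge_iff_le]
    linarith
  exact ⟨part1a, part1b, part2, part3, part4, part5⟩
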